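/- Let η = (K1, K2, K3, K4, κ3, κ6, κ9, κ12) be a tuple of positive real parameters. Then either p_η(x1,x2,x3) > 0 for all x1 > 0, x2 > 0, x3 > 0, or there exist x1 > 0, x2 > 0, x3 > 0 with p_η(x1,x2,x3) < 0; equivalently, if p_η is nonnegative on the positive orthant then it is strictly positive on the positive orthant. -/
import Mathlib


/-- The trivariate polynomial `p_η` governing monostationarity of dual phosphorylation. -/
def pEta (K1 K2 K3 K4 κ3 κ6 κ9 κ12 x1 x2 x3 : ℝ) : ℝ :=
  K2 * κ3 * (κ3 * κ12 - κ6 * κ9) *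
      (K2 * K4 * κ3 * κ9 * x1 ^ 4 * x3 ^ 2
        + K1 * K3 * κ6 * κ12 *
            (x1 ^ 3 * x2 ^ 2 * x3 + x1 ^ 2 * x2 ^ 3 * x3 + x1 ^ 2 * x2 ^ 2 * x3 ^ 2)
        + K2 * K3 * κ3 * κ12 * x1 ^ 3 * x2 * x3 ^ 2)
    + K1 * K2 * K3 * κ3 * κ6 * κ12 * ((K2 + K3) * κ3 * κ12 - (K1 + K4) * κ6 * κ9)
        * x1 ^ 2 * x2 ^ 2 * x3
    + K1 * κ6 *
        (K2 ^ 2 * K4 * κ3 ^ 2 * κ9 ^ 2 * x1 ^ 4 * x3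
          + 2 * K2 * K3 * K4 * κ3 ^ 2 * κ9 * κ12 * x1 ^ 3 * x2 * x3
          + K1 * K2 * K3 * κ3 * κ6 * κ12 * (κ9 + κ12) * x1 ^ 2 * x2 ^ 3
          + K1 * K2 * K3 * K4 * κ3 * κ6 * κ9 * κ12 * x1 ^ 2 * x2 ^ 2
          + K1 * K3 ^ 2 * κ6 * κ12 ^ 2 * (κ3 + κ6) * x1 * x2 ^ 4
          + 2 * K1 * K2 * K3 * κ3 * κ6 * κ12 ^ 2 * x1 * x2 ^ 3 * x3
          + K1 * K2 * K3 ^ 2 * κ3 * κ6 * κ12 ^ 2 * x1 * x2 ^ 3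
          + K1 * K3 ^ 2 * κ6 ^ 2 * κ12 ^ 2 * x2 ^ 4 * x3
          + K1 ^ 2 * K3 ^ 2 * κ6 ^ 2 * κ12 ^ 2 * x2 ^ 4)


/-- coefficient of `x3^2` -/
def qA (K1 K2 K3 K4 κ3 κ6 κ9 κ12 x1 x2 : ℝ) : ℝ :=
  K2 * κ3 * (κ3 * κ12 - κ6 * κ9) *
    (K2 * K4 * κ3 * κ9 * x1 ^ 4 + K1 * K3 * κ6 * κ12 * x1 ^ 2 * x2 ^ 2
      + K2 * K3 * κ3 * κ12 * x1 ^ 3 * x2)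

/-- degree-5 part of the coefficient of `x3` -/
def qB5 (K1 K2 K3 K4 κ3 κ6 κ9 κ12 x1 x2 : ℝ) : ℝ :=
  K2 * κ3 * (κ3 * κ12 - κ6 * κ9) * (K1 * K3 * κ6 * κ12)
    * (x1 ^ 3 * x2 ^ 2 + x1 ^ 2 * x2 ^ 3)

/-- degree-4 part of the coefficient of `x3` -/
def qB4 (K1 K2 K3 K4 κ3 κ6 κ9 κ12 x1 x2 : ℝ) : ℝ :=
  K1 * K2 * K3 * κ3 * κ6 * κ12 * ((K2 + K3) * κ3 * κ12 - (K1 + K4) * κ6 * κ9)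
      * x1 ^ 2 * x2 ^ 2
    + K1 * κ6 *
        (K2 ^ 2 * K4 * κ3 ^ 2 * κ9 ^ 2 * x1 ^ 4
          + 2 * K2 * K3 * K4 * κ3 ^ 2 * κ9 * κ12 * x1 ^ 3 * x2
          + 2 * K1 * K2 * K3 * κ3 * κ6 * κ12 ^ 2 * x1 * x2 ^ 3
          + K1 * K3 ^ 2 * κ6 ^ 2 * κ12 ^ 2 * x2 ^ 4)

/-- degree-5 part of the constant term (in `x3`) -/
def qC5 (K1 K2 K3 K4 κ3 κ6 κ9 κ12 x1 x2 : ℝ) : ℝ :=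
  K1 * κ6 *
    (K1 * K2 * K3 * κ3 * κ6 * κ12 * (κ9 + κ12) * x1 ^ 2 * x2 ^ 3
      + K1 * K3 ^ 2 * κ6 * κ12 ^ 2 * (κ3 + κ6) * x1 * x2 ^ 4)

/-- degree-4 part of the constant term (in `x3`) -/
def qC4 (K1 K2 K3 K4 κ3 κ6 κ9 κ12 x1 x2 : ℝ) : ℝ :=
  K1 * κ6 *
    (K1 * K2 * K3 * K4 * κ3 * κ6 * κ9 * κ12 * x1 ^ 2 * x2 ^ 2
      + K1 * K2 * K3 ^ 2 * κ3 * κ6 * κ12 ^ 2 * x1 * x2 ^ 3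
      + K1 ^ 2 * K3 ^ 2 * κ6 ^ 2 * κ12 ^ 2 * x2 ^ 4)

lemma pEta_eq_quad (K1 K2 K3 K4 κ3 κ6 κ9 κ12 x1 x2 y : ℝ) :
    pEta K1 K2 K3 K4 κ3 κ6 κ9 κ12 x1 x2 y =
      qA K1 K2 K3 K4 κ3 κ6 κ9 κ12 x1 x2 * y ^ 2
        + (qB5 K1 K2 K3 K4 κ3 κ6 κ9 κ12 x1 x2 + qB4 K1 K2 K3 K4 κ3 κ6 κ9 κ12 x1 x2) * y
        + (qC5 K1 K2 K3 K4 κ3 κ6 κ9 κ12 x1 x2 + qC4 K1 K2 K3 K4 κ3 κ6 κ9 κ12 x1 x2) := by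
  unfold pEta qA qB5 qB4 qC5 qC4; ring

lemma pEta_half_eq (K1 K2 K3 K4 κ3 κ6 κ9 κ12 x1 x2 y : ℝ) :
    pEta K1 K2 K3 K4 κ3 κ6 κ9 κ12 (x1 / 2) (x2 / 2) y =
      (1 / 16) * (qA K1 K2 K3 K4 κ3 κ6 κ9 κ12 x1 x2 * y ^ 2
        + (qB5 K1 K2 K3 K4 κ3 κ6 κ9 κ12 x1 x2 / 2 + qB4 K1 K2 K3 K4 κ3 κ6 κ9 κ12 x1 x2) * y
        + (qC5 K1 K2 K3 K4 κ3 κ6 κ9 κ12 x1 x2 / 2 + qC4 K1 K2 K3 K4 κ3 κ6 κ9 κ12 x1 x2)) := by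
  unfold pEta qA qB5 qB4 qC5 qC4; ring

set_option maxHeartbeats 1600000 in
lemma pEta_key (K1 K2 K3 K4 κ3 κ6 κ9 κ12 : ℝ)
    (hK1 : 0 < K1) (hK2 : 0 < K2) (hK3 : 0 < K3) (hK4 : 0 < K4)
    (hκ3 : 0 < κ3) (hκ6 : 0 < κ6) (hκ9 : 0 < κ9) (hκ12 : 0 < κ12)
    (hp : ∀ x1 x2 x3 : ℝ, 0 < x1 → 0 < x2 → 0 < x3 →
        0 ≤ pEta K1 K2 K3 K4 κ3 κ6 κ9 κ12 x1 x2 x3) :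
    ∀ x1 x2 x3 : ℝ, 0 < x1 → 0 < x2 → 0 < x3 →
        0 < pEta K1 K2 K3 K4 κ3 κ6 κ9 κ12 x1 x2 x3 := by
  intro x1 x2 x3 h1 h2 h3
  by_contra hcon
  push_neg at hcon
  rw [pEta_eq_quad] at hcon
  -- abbreviate the five coefficient blocks and make them opaque
  set A := qA K1 K2 K3 K4 κ3 κ6 κ9 κ12 x1 x2 with hAdef
  set B5 := qB5 K1 K2 K3 K4 κ3 κ6 κ9 κ12 x1 x2 with hB5def
  set B4 := qB4 K1 K2 K3 K4 κ3 κ6 κ9 κ12 x1 x2 with hB4def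
  set C5 := qC5 K1 K2 K3 K4 κ3 κ6 κ9 κ12 x1 x2 with hC5def
  set C4 := qC4 K1 K2 K3 K4 κ3 κ6 κ9 κ12 x1 x2 with hC4def
  clear_value A B5 B4 C5 C4
  -- a convenient form of `hp` at the scaled point, in terms of the blocks
  have hp' : ∀ y : ℝ, 0 < y →
      0 ≤ A * y ^ 2 + (B5 / 2 + B4) * y + (C5 / 2 + C4) := by
    intro y hy
    have h := hp (x1 / 2) (x2 / 2) y (by linarith) (by linarith) hy
    rw [pEta_half_eq] at h
    rw [← hAdef, ← hB5def, ← hB4def, ← hC5def, ← hC4def] at h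
    linarith
  have hpx : ∀ y : ℝ, 0 < y →
      0 ≤ A * y ^ 2 + (B5 + B4) * y + (C5 + C4) := by
    intro y hy
    have h := hp x1 x2 y h1 h2 hy
    rw [pEta_eq_quad] at h
    rw [← hAdef, ← hB5def, ← hB4def, ← hC5def, ← hC4def] at h
    exact h
  have hC5 : 0 < C5 := by rw [hC5def]; unfold qC5; positivity
  have hC4 : 0 < C4 := by rw [hC4def]; unfold qC4; positivity
  -- Step 1: κ3 * κ12 - κ6 * κ9 > 0
  have ha : 0 < κ3 * κ12 - κ6 * κ9 := by
    by_contra ha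
    push_neg at ha
    have hApos : 0 < K2 * K4 * κ3 * κ9 * x1 ^ 4 + K1 * K3 * κ6 * κ12 * x1 ^ 2 * x2 ^ 2
        + K2 * K3 * κ3 * κ12 * x1 ^ 3 * x2 := by positivity
    rcases ha.lt_or_eq with hlt | heq
    · -- a < 0 : the quadratic coefficient is negative, large y gives a negative value
      have hAneg : A < 0 := by
        rw [hAdef]; unfold qA
        exact mul_neg_of_neg_of_pos (mul_neg_of_pos_of_neg (by positivity) hlt) hApos
      set T : ℝ := max 1 ((|B5 + B4| + C5 + C4 + 1) / (-A)) with hTdef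
      have hT1 : (1 : ℝ) ≤ T := le_max_left _ _
      have hT : 0 < T := by linarith
      have hTA : |B5 + B4| + C5 + C4 + 1 ≤ T * (-A) := by
        have h : (|B5 + B4| + C5 + C4 + 1) / (-A) ≤ T := le_max_right _ _
        rwa [div_le_iff₀ (by linarith : (0:ℝ) < -A)] at h
      have habs : B5 + B4 ≤ |B5 + B4| := le_abs_self _
      have hq := hpx T hT
      nlinarith [mul_nonneg (by linarith : (0:ℝ) ≤ T * (-A) - (|B5 + B4| + C5 + C4 + 1)) hT.le,
        mul_nonneg (by linarith : (0:ℝ) ≤ |B5 + B4| - (B5 + B4)) hT.le,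
        mul_nonneg (by linarith : (0:ℝ) ≤ T - 1) (by linarith : (0:ℝ) ≤ C5 + C4 + 1)]
    · -- a = 0 : the quadratic and leading linear parts vanish
      have hA0 : A = 0 := by rw [hAdef]; unfold qA; rw [heq]; ring
      have hB50 : B5 = 0 := by rw [hB5def]; unfold qB5; rw [heq]; ring
      rw [hA0, hB50] at hcon
      have hB4neg : B4 < 0 := by
        by_contra hB4
        push_neg at hB4
        nlinarith [mul_nonneg hB4 h3.le]
      set T : ℝ := (C5 + C4 + 1) / (-B4) with hTdef
      have hT : 0 < T := div_pos (by linarith) (by linarith)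
      have hBT : B4 * T = -(C5 + C4 + 1) := by
        rw [hTdef, mul_comm, div_mul_eq_mul_div,
          div_eq_iff (by linarith : (-B4 : ℝ) ≠ 0)]
        ring
      have hq := hpx T hT
      rw [hA0, hB50] at hq
      nlinarith
  -- Step 2: A > 0 and B5 > 0
  have hA : 0 < A := by
    rw [hAdef]; unfold qA
    exact mul_pos (mul_pos (mul_pos hK2 hκ3) ha) (by positivity)
  have hB5 : 0 < B5 := by
    rw [hB5def]; unfold qB5
    exact mul_pos (mul_pos (mul_pos (mul_pos hK2 hκ3) ha) (by positivity)) (by positivity)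
  -- Step 3: B5 + B4 < 0
  have hB : B5 + B4 < 0 := by
    by_contra hB
    push_neg at hB
    nlinarith [mul_pos hA (pow_pos h3 2), mul_nonneg hB h3.le]
  -- Step 4: the discriminant is nonnegative
  have hdisc : 4 * A * (C5 + C4) ≤ (B5 + B4) ^ 2 := by
    nlinarith [sq_nonneg (2 * A * x3 + (B5 + B4)),
      mul_nonpos_of_nonneg_of_nonpos hA.le hcon]
  -- Step 5: at the scaled point, the discriminant is strictly positive
  have hdisc' : 4 * A * (C5 / 2 + C4) < (B5 / 2 + B4) ^ 2 := by
    nlinarith [mul_pos hB5 (neg_pos.mpr hB), sq_nonneg B5, mul_pos hA hC5]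
  have hB' : B5 / 2 + B4 < 0 := by linarith
  -- Step 6: evaluate at the vertex of the scaled quadratic
  set y : ℝ := -(B5 / 2 + B4) / (2 * A) with hydef
  have hy : 0 < y := div_pos (by linarith) (by linarith)
  have hpy := hp' y hy
  have hval : A * y ^ 2 + (B5 / 2 + B4) * y + (C5 / 2 + C4)
      = (4 * A * (C5 / 2 + C4) - (B5 / 2 + B4) ^ 2) / (4 * A) := by
    rw [hydef]
    field_simp [hA.ne']
    ring
  rw [hval] at hpy
  have : (4 * A * (C5 / 2 + C4) - (B5 / 2 + B4) ^ 2) / (4 * A) < 0 :=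
    div_neg_of_neg_of_pos (by linarith) (by linarith)
  linarith

/-- The polynomial `p_η` is either strictly positive on the positive
orthant or attains a negative value there; equivalently, if it is nonnegative on the
positive orthant then it is strictly positive there. -/
theorem pEta_pos_or_neg
    (K1 K2 K3 K4 κ3 κ6 κ9 κ12 : ℝ)
    (hK1 : 0 < K1) (hK2 : 0 < K2) (hK3 : 0 < K3) (hK4 : 0 < K4)
    (hκ3 : 0 < κ3) (hκ6 : 0 < κ6) (hκ9 : 0 < κ9) (hκ12 : 0 < κ12) :
    ((∀ x1 x2 x3 : ℝ, 0 < x1 → 0 < x2 → 0 < x3 →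
        0 < pEta K1 K2 K3 K4 κ3 κ6 κ9 κ12 x1 x2 x3) ∨
      (∃ x1 x2 x3 : ℝ, 0 < x1 ∧ 0 < x2 ∧ 0 < x3 ∧
        pEta K1 K2 K3 K4 κ3 κ6 κ9 κ12 x1 x2 x3 < 0)) ∧
    ((∀ x1 x2 x3 : ℝ, 0 < x1 → 0 < x2 → 0 < x3 →
        0 ≤ pEta K1 K2 K3 K4 κ3 κ6 κ9 κ12 x1 x2 x3) →
      (∀ x1 x2 x3 : ℝ, 0 < x1 → 0 < x2 → 0 < x3 →
        0 < pEta K1 K2 K3 K4 κ3 κ6 κ9 κ12 x1 x2 x3)) := by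

  have key := pEta_key K1 K2 K3 K4 κ3 κ6 κ9 κ12 hK1 hK2 hK3 hK4 hκ3 hκ6 hκ9 hκ12
  constructor
  · rcases Classical.em (∃ x1 x2 x3 : ℝ, 0 < x1 ∧ 0 < x2 ∧ 0 < x3 ∧
        pEta K1 K2 K3 K4 κ3 κ6 κ9 κ12 x1 x2 x3 < 0) with h | h
    · exact Or.inr h
    · push_neg at h
      exact Or.inl (key (fun x1 x2 x3 h1 h2 h3 => h x1 x2 x3 h1 h2 h3))
  · exact key
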